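/- Fix ε > 0 and η ∈ C_c^1(ℝ^N; ℝ). Define I(ρ)(x) = -ε (ρ*∇η)(x) / √(1 + ‖(ρ*∇η)(x)‖²). Then for all r₁, r₂ ∈ L¹(ℝ^N; ℝ), ‖I(r₁) - I(r₂)‖_{L^∞} ≤ ε (1 + R² ‖∇η‖_{L¹}²) ‖∇η‖_{L^∞} ‖r₁ - r₂‖_{L¹}, provided r₁, r₂ take values in [0, R]. -/

import Mathlib

open MeasureTheory

lemma key_ineq {E : Type*} [NormedAddCommGroup E] [NormedSpace ℝ E] (a b : E) :
    ‖(Real.sqrt (1 + ‖a‖ ^ 2))⁻¹ • a - (Real.sqrt (1 + ‖b‖ ^ 2))⁻¹ • b‖ ≤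
      (1 + ‖b‖ * (‖a‖ + ‖b‖) / 2) * ‖a - b‖ := by
  set sa := Real.sqrt (1 + ‖a‖ ^ 2) with hsa
  set sb := Real.sqrt (1 + ‖b‖ ^ 2) with hsb
  have hsa1 : 1 ≤ sa := by
    rw [hsa, Real.one_le_sqrt]
    exact le_add_of_nonneg_right (sq_nonneg _)
  have hsb1 : 1 ≤ sb := by
    rw [hsb, Real.one_le_sqrt]
    exact le_add_of_nonneg_right (sq_nonneg _)
  have hsa2 : sa ^ 2 = 1 + ‖a‖ ^ 2 := Real.sq_sqrt (by positivity)
  have hsb2 : sb ^ 2 = 1 + ‖b‖ ^ 2 := Real.sq_sqrt (by positivity)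
  have hab : |‖a‖ - ‖b‖| ≤ ‖a - b‖ := abs_norm_sub_norm_le a b
  have hdiff : |sa⁻¹ - sb⁻¹| ≤ ‖a - b‖ * (‖a‖ + ‖b‖) / 2 := by
    have h1 : sa⁻¹ - sb⁻¹ = (sb - sa) / (sa * sb) := by
      field_simp
    have h2 : |sb - sa| ≤ ‖a - b‖ * (‖a‖ + ‖b‖) / 2 := by
      have h3 : (sb - sa) * (sb + sa) = ‖b‖ ^ 2 - ‖a‖ ^ 2 := by nlinarith
      have hX : ‖b‖ ^ 2 - ‖a‖ ^ 2 ≤ ‖a - b‖ * (‖a‖ + ‖b‖) := by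
        nlinarith [(abs_le.1 hab).1, (abs_le.1 hab).2, norm_nonneg a, norm_nonneg b]
      have hX' : ‖a‖ ^ 2 - ‖b‖ ^ 2 ≤ ‖a - b‖ * (‖a‖ + ‖b‖) := by
        nlinarith [(abs_le.1 hab).1, (abs_le.1 hab).2, norm_nonneg a, norm_nonneg b]
      have hXpos : 0 ≤ ‖a - b‖ * (‖a‖ + ‖b‖) :=
        mul_nonneg (norm_nonneg _) (add_nonneg (norm_nonneg _) (norm_nonneg _))
      rw [abs_le]
      constructor <;> nlinarith [hX, hX', hXpos, hsa1, hsb1, h3]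
    calc |sa⁻¹ - sb⁻¹| = |sb - sa| / (sa * sb) := by
          rw [h1, abs_div, abs_of_pos (by nlinarith : (0:ℝ) < sa * sb)]
      _ ≤ |sb - sa| := div_le_self (abs_nonneg _) (by nlinarith)
      _ ≤ _ := h2
  have decomp : sa⁻¹ • a - sb⁻¹ • b = sa⁻¹ • (a - b) + (sa⁻¹ - sb⁻¹) • b := by
    rw [smul_sub, sub_smul]; abel
  rw [decomp]
  calc ‖sa⁻¹ • (a - b) + (sa⁻¹ - sb⁻¹) • b‖
      ≤ ‖sa⁻¹ • (a - b)‖ + ‖(sa⁻¹ - sb⁻¹) • b‖ := norm_add_le _ _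
    _ = |sa⁻¹| * ‖a - b‖ + |sa⁻¹ - sb⁻¹| * ‖b‖ := by rw [norm_smul, norm_smul]; rfl
    _ ≤ 1 * ‖a - b‖ + (‖a - b‖ * (‖a‖ + ‖b‖) / 2) * ‖b‖ := by
        gcongr
        · rw [abs_of_pos (by positivity)]
          exact inv_le_one_of_one_le₀ hsa1
    _ = (1 + ‖b‖ * (‖a‖ + ‖b‖) / 2) * ‖a - b‖ := by ring

/-- Lipschitz estimate in `L^∞` for the nonlocal deviation operator
`I(ρ) = -ε (ρ*∇η)/√(1+‖ρ*∇η‖²)`: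
`‖I(r₁) - I(r₂)‖_{L^∞} ≤ ε (1 + R²‖∇η‖_{L¹}²) ‖∇η‖_{L^∞} ‖r₁ - r₂‖_{L¹}`. -/
theorem stmt3 (N : ℕ) (hN : 0 < N) (ε R : ℝ) (hε : 0 < ε) (hR : 0 < R)
    (η : EuclideanSpace ℝ (Fin N) → ℝ) (hη : ContDiff ℝ 1 η)
    (hηc : HasCompactSupport η)
    (I : (EuclideanSpace ℝ (Fin N) → ℝ) → EuclideanSpace ℝ (Fin N) → EuclideanSpace ℝ (Fin N))
    (hI : ∀ ρ x, I ρ x =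
      -((ε * (Real.sqrt (1 + ‖∫ y, ρ y • gradient η (x - y)‖ ^ 2))⁻¹) •
        ∫ y, ρ y • gradient η (x - y)))
    (r₁ r₂ : EuclideanSpace ℝ (Fin N) → ℝ)
    (h1 : Integrable r₁) (h2 : Integrable r₂)
    (hb1 : ∀ x, r₁ x ∈ Set.Icc 0 R) (hb2 : ∀ x, r₂ x ∈ Set.Icc 0 R) :
    ∀ x, ‖I r₁ x - I r₂ x‖ ≤
      ε * (1 + R ^ 2 * (∫ z, ‖gradient η z‖) ^ 2) * (⨆ z, ‖gradient η z‖) *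
        ∫ y, |r₁ y - r₂ y| := by
  intro x
  set g := gradient η with hg
  have hgcont : Continuous g := by
    have h1 : Continuous (fderiv ℝ η) := hη.continuous_fderiv one_ne_zero
    exact ((InnerProductSpace.toDual ℝ _).symm.continuous).comp h1
  have hgsupp : HasCompactSupport g :=
    (hηc.fderiv ℝ).comp_left (g := (InnerProductSpace.toDual ℝ _).symm) (map_zero _)
  set M := ⨆ z, ‖g z‖ with hM
  have hbdd : BddAbove (Set.range fun z => ‖g z‖) :=
    hgcont.norm.bddAbove_range_of_hasCompactSupport hgsupp.norm
  have hgM : ∀ z, ‖g z‖ ≤ M := fun z => le_ciSup hbdd z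
  set L := ∫ z, ‖g z‖ with hL
  have hgint : Integrable g := hgcont.integrable_of_hasCompactSupport hgsupp
  have hLnn : 0 ≤ L := integral_nonneg fun z => norm_nonneg _
  have hMnn : 0 ≤ M := le_trans (norm_nonneg (g 0)) (hgM 0)
  -- integrability of the convolution integrand
  have hint : ∀ ρ : EuclideanSpace ℝ (Fin N) → ℝ, Integrable ρ →
      Integrable (fun y => ρ y • g (x - y)) := by
    intro ρ hρ
    have hmeas : AEStronglyMeasurable (fun y => ρ y • g (x - y)) volume :=
      hρ.1.smul ((hgcont.comp (continuous_const.sub continuous_id)).aestronglyMeasurable)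
    refine (hρ.norm.mul_const M).mono' hmeas ?_
    filter_upwards with y
    rw [norm_smul]
    exact mul_le_mul_of_nonneg_left (hgM _) (norm_nonneg _)
  set a := ∫ y, r₁ y • g (x - y) with ha
  set b := ∫ y, r₂ y • g (x - y) with hb
  set D := ∫ y, |r₁ y - r₂ y| with hD
  have hDnn : 0 ≤ D := integral_nonneg fun y => abs_nonneg _
  -- bound on ‖a‖ and ‖b‖
  have hnorm_conv : ∀ ρ : EuclideanSpace ℝ (Fin N) → ℝ, Integrable ρ →
      (∀ y, ρ y ∈ Set.Icc 0 R) → ‖∫ y, ρ y • g (x - y)‖ ≤ R * L := by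
    intro ρ hρ hρb
    calc ‖∫ y, ρ y • g (x - y)‖ ≤ ∫ y, ‖ρ y • g (x - y)‖ :=
          norm_integral_le_integral_norm _
      _ ≤ ∫ y, R * ‖g (x - y)‖ := by
          refine integral_mono_of_nonneg (Filter.Eventually.of_forall fun y => norm_nonneg _)
            ((((integrable_comp_sub_left (fun z => ‖g z‖) x).2 hgint.norm)).const_mul R) ?_
          filter_upwards with y
          rw [norm_smul]
          refine mul_le_mul_of_nonneg_right ?_ (norm_nonneg _)
          rw [Real.norm_eq_abs, abs_of_nonneg (hρb y).1]
          exact (hρb y).2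
      _ = R * ∫ y, ‖g (x - y)‖ := integral_const_mul _ _
      _ = R * L := by rw [hL, integral_sub_left_eq_self (fun z => ‖g z‖) volume x]
  have hna : ‖a‖ ≤ R * L := hnorm_conv r₁ h1 hb1
  have hnb : ‖b‖ ≤ R * L := hnorm_conv r₂ h2 hb2
  -- bound on ‖a - b‖
  have hab : ‖a - b‖ ≤ M * D := by
    have hsub : a - b = ∫ y, (r₁ y - r₂ y) • g (x - y) := by
      rw [ha, hb, ← integral_sub (hint r₁ h1) (hint r₂ h2)]
      congr 1; ext y; rw [sub_smul]
    rw [hsub]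
    calc ‖∫ y, (r₁ y - r₂ y) • g (x - y)‖ ≤ ∫ y, ‖(r₁ y - r₂ y) • g (x - y)‖ :=
          norm_integral_le_integral_norm _
      _ ≤ ∫ y, |r₁ y - r₂ y| * M := by
          refine integral_mono_of_nonneg (Filter.Eventually.of_forall fun y => norm_nonneg _)
            (((h1.sub h2).abs).mul_const M) ?_
          filter_upwards with y
          rw [norm_smul, Real.norm_eq_abs]
          exact mul_le_mul_of_nonneg_left (hgM _) (abs_nonneg _)
      _ = D * M := integral_mul_const _ _
      _ = M * D := mul_comm _ _
  -- put everything together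
  rw [hI r₁ x, hI r₂ x]
  have hdiff : -((ε * (Real.sqrt (1 + ‖a‖ ^ 2))⁻¹) • a) -
      -((ε * (Real.sqrt (1 + ‖b‖ ^ 2))⁻¹) • b) =
      -(ε • ((Real.sqrt (1 + ‖a‖ ^ 2))⁻¹ • a - (Real.sqrt (1 + ‖b‖ ^ 2))⁻¹ • b)) := by
    rw [smul_sub, mul_smul, mul_smul]; abel
  rw [hdiff, norm_neg, norm_smul, Real.norm_eq_abs, abs_of_pos hε]
  calc ε * ‖(Real.sqrt (1 + ‖a‖ ^ 2))⁻¹ • a - (Real.sqrt (1 + ‖b‖ ^ 2))⁻¹ • b‖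
      ≤ ε * ((1 + ‖b‖ * (‖a‖ + ‖b‖) / 2) * ‖a - b‖) := by
        gcongr
        exact key_ineq a b
    _ ≤ ε * ((1 + R ^ 2 * L ^ 2) * (M * D)) := by
        have h₁ : 1 + ‖b‖ * (‖a‖ + ‖b‖) / 2 ≤ 1 + R ^ 2 * L ^ 2 := by
          nlinarith [norm_nonneg a, norm_nonneg b, mul_nonneg hR.le hLnn]
        exact mul_le_mul_of_nonneg_left
          (mul_le_mul h₁ hab (norm_nonneg _) (by positivity)) hε.le
    _ = ε * (1 + R ^ 2 * L ^ 2) * M * D := by ring
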